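/- For every n ≥ 1, twice the number of even derangements in S_n equals D_n + (−1)^{n−1}(n−1); that is, 2 · |{σ ∈ A_n : σ has no fixed points}| = D_n + (−1)^{n−1}(n−1). In particular, the proportion of derangements in A_n equals (D_n + (−1)^{n−1}(n−1)) / n!. -/

import Mathlib

open Equiv Finset Matrix
set_option maxHeartbeats 800000

lemma det_J_sub_one (n : ℕ) (hn : 1 ≤ n) :
    (Matrix.of (fun i j : Fin n => if i = j then (0:ℤ) else 1)).det
      = (-1) ^ (n - 1) * ((n : ℤ) - 1) := by
  have hM : Matrix.of (fun i j : Fin n => if i = j then (0:ℤ) else 1)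
      = -(1 + Matrix.replicateCol Unit (fun _ => (-1:ℤ)) * Matrix.replicateRow Unit (fun _ => (1:ℤ))) := by
    ext i j
    by_cases h : i = j <;> simp [Matrix.one_apply, Matrix.mul_apply, h]
  rw [hM, Matrix.det_neg, Matrix.det_one_add_replicateCol_mul_replicateRow]
  obtain ⟨m, rfl⟩ := Nat.exists_eq_add_of_le hn
  simp [dotProduct]
  ring

lemma sum_sign_derangements (n : ℕ) (hn : 1 ≤ n) :
    ∑ σ ∈ Finset.univ.filter (fun σ : Perm (Fin n) => ∀ x, σ x ≠ x),
      (Perm.sign σ : ℤ) = (-1) ^ (n - 1) * ((n : ℤ) - 1) := by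
  rw [← det_J_sub_one n hn, Matrix.det_apply, Finset.sum_filter]
  refine Finset.sum_congr rfl fun σ _ => ?_
  by_cases h : ∀ x, σ x ≠ x
  · rw [if_pos h]
    have : ∀ i ∈ Finset.univ, Matrix.of (fun i j : Fin n => if i = j then (0:ℤ) else 1) (σ i) i = 1 := by
      intro i _
      simp [h i]
    rw [Finset.prod_congr rfl this, Finset.prod_const_one]
    simp [Units.smul_def]
  · rw [if_neg h]
    push_neg at h
    obtain ⟨x, hx⟩ := h
    rw [Finset.prod_eq_zero (Finset.mem_univ x)]
    · simp
    · simp [hx]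

theorem two_mul_even_derangements (n : ℕ) (hn : 1 ≤ n) :
    2 * ({σ : Equiv.Perm (Fin n) | σ ∈ alternatingGroup (Fin n) ∧ ∀ x, σ x ≠ x}.ncard : ℤ)
      = (numDerangements n : ℤ) + (-1) ^ (n - 1) * ((n : ℤ) - 1) ∧
    (({σ : Equiv.Perm (Fin n) | σ ∈ alternatingGroup (Fin n) ∧ ∀ x, σ x ≠ x}.ncard : ℚ)
        / (Nat.card (alternatingGroup (Fin n)) : ℚ)
      = ((numDerangements n : ℚ) + (-1) ^ (n - 1) * ((n : ℚ) - 1)) / (Nat.factorial n : ℚ)) := by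
  classical
  set d : Finset (Perm (Fin n)) := Finset.univ.filter (fun σ => ∀ x, σ x ≠ x) with hd
  set s : Finset (Perm (Fin n)) := d.filter (fun σ => Perm.sign σ = 1) with hs
  set t : Finset (Perm (Fin n)) := d.filter (fun σ => ¬ Perm.sign σ = 1) with ht
  -- the set equals ↑s
  have hset : {σ : Equiv.Perm (Fin n) | σ ∈ alternatingGroup (Fin n) ∧ ∀ x, σ x ≠ x} = ↑s := by
    ext σ
    simp [hs, hd, Perm.mem_alternatingGroup, and_comm]
  have hncard : ({σ : Equiv.Perm (Fin n) | σ ∈ alternatingGroup (Fin n) ∧ ∀ x, σ x ≠ x}.ncard) = s.card := by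
    rw [hset, Set.ncard_coe_finset]
  -- cardinalities
  have hcard_d : d.card = numDerangements n := by
    have h1 : Fintype.card (derangements (Fin n)) = numDerangements (Fintype.card (Fin n)) :=
      card_derangements_eq_numDerangements (Fin n)
    rw [Fintype.card_fin] at h1
    rw [← h1, Fintype.card_subtype]
    congr 1
    ext σ
    simp only [hd, Finset.mem_filter, Finset.mem_univ, true_and, derangements, Set.mem_setOf_eq]
  have hsplit : s.card + t.card = d.card := Finset.card_filter_add_card_filter_not _
  -- sum of signs
  have hsum : (s.card : ℤ) - t.card = (-1) ^ (n - 1) * ((n : ℤ) - 1) := by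
    rw [← sum_sign_derangements n hn, ← hd,
      ← Finset.sum_filter_add_sum_filter_not d (fun σ => Perm.sign σ = 1) (fun σ => (Perm.sign σ : ℤ))]
    rw [← hs, ← ht]
    have h1 : ∑ σ ∈ s, (Perm.sign σ : ℤ) = s.card := by
      have e1 : ∀ σ ∈ s, ((Perm.sign σ : ℤˣ) : ℤ) = 1 := fun σ hσ => by
        have := (Finset.mem_filter.mp hσ).2
        simp [this]
      rw [Finset.sum_congr rfl e1, Finset.sum_const, nsmul_eq_mul, mul_one]
    have h2 : ∑ σ ∈ t, (Perm.sign σ : ℤ) = -t.card := by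
      have e2 : ∀ σ ∈ t, ((Perm.sign σ : ℤˣ) : ℤ) = -1 := fun σ hσ => by
        have h3 := (Finset.mem_filter.mp hσ).2
        rcases Int.units_eq_one_or (Perm.sign σ) with h | h
        · exact absurd h h3
        · simp [h]
      rw [Finset.sum_congr rfl e2, Finset.sum_const, nsmul_eq_mul, mul_neg_one]
    rw [h1, h2]
    ring
  have part1 : 2 * ({σ : Equiv.Perm (Fin n) | σ ∈ alternatingGroup (Fin n) ∧ ∀ x, σ x ≠ x}.ncard : ℤ)
      = (numDerangements n : ℤ) + (-1) ^ (n - 1) * ((n : ℤ) - 1) := by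
    rw [hncard, ← hcard_d, ← hsplit]
    push_cast
    linarith
  refine ⟨part1, ?_⟩
  rcases eq_or_lt_of_le hn with h1 | h2
  · -- n = 1
    subst h1
    have h0 : ({σ : Equiv.Perm (Fin 1) | σ ∈ alternatingGroup (Fin 1) ∧ ∀ x, σ x ≠ x}.ncard) = 0 := by
      have := part1
      simp [numDerangements] at this
      simpa [Perm.mem_alternatingGroup] using this
    rw [h0]
    simp [numDerangements]
  · -- n ≥ 2
    have hnt : Nontrivial (Fin n) := Fin.nontrivial_iff_two_le.mpr h2
    have hA : 2 * Fintype.card (alternatingGroup (Fin n)) = Fintype.card (Perm (Fin n)) :=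
      two_mul_card_alternatingGroup
    rw [Fintype.card_perm, Fintype.card_fin] at hA
    have hAQ : 2 * (Nat.card (alternatingGroup (Fin n)) : ℚ) = (Nat.factorial n : ℚ) := by
      rw [Nat.card_eq_fintype_card]
      exact_mod_cast hA
    have hA0 : (Nat.card (alternatingGroup (Fin n)) : ℚ) ≠ 0 := by
      rw [Nat.card_eq_fintype_card]
      exact_mod_cast Fintype.card_ne_zero
    have hf0 : (Nat.factorial n : ℚ) ≠ 0 := by exact_mod_cast n.factorial_ne_zero
    have p1Q : 2 * ({σ : Equiv.Perm (Fin n) | σ ∈ alternatingGroup (Fin n) ∧ ∀ x, σ x ≠ x}.ncard : ℚ)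
        = (numDerangements n : ℚ) + (-1) ^ (n - 1) * ((n : ℚ) - 1) := by
      exact_mod_cast part1
    rw [div_eq_div_iff hA0 hf0, ← hAQ, ← p1Q]
    ring
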